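/- arXiv:2604.02312 — 3 statements merged into one kernel-verified Lean document; each statement's English description precedes it below -/
import Mathlib

section
/- For every real number $\beta > 0$ and every $\beta$-semiconcave function $f : \mathbb{R}^d \to \mathbb{R}$ (i.e. $x \mapsto \tfrac{\beta}{2}|x|^2 - f(x)$ is convex), the function $x \mapsto -\log\big((e^{-f} * \gamma)(x)\big)$ is $\tfrac{\beta}{1+\beta}$-semiconcave, i.e. $x \mapsto \tfrac{\beta}{2(1+\beta)}|x|^2 + \log\big((e^{-f} * \gamma)(x)\big)$ is convex, where $\gamma$ is the standard Gaussian density on $\mathbb{R}^d$ and $*$ denotes convolution. -/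
open MeasureTheory ProbabilityTheory Filter Topology Set
open scoped ENNReal RealInnerProductSpace

noncomputable section

abbrev Euc (d : ℕ) := EuclideanSpace ℝ (Fin d)

/-- Density of the Gaussian with mean `x` and identity covariance. -/
def gaussDensity {d : ℕ} (x y : Euc d) : ℝ :=
  (2 * Real.pi) ^ (-(d : ℝ) / 2) * Real.exp (-‖y - x‖ ^ 2 / 2)

/-- Gaussian measure with mean `x` and identity covariance. -/
def gaussian {d : ℕ} (x : Euc d) : Measure (Euc d) :=
  volume.withDensity fun y => ENNReal.ofReal (gaussDensity x y)

/-- Finite second moment. -/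
def FiniteSecondMoment {d : ℕ} (μ : Measure (Euc d)) : Prop :=
  ∫⁻ x, ENNReal.ofReal (‖x‖ ^ 2) ∂μ < ⊤

/-- Barycenter of a measure. -/
def bary {d : ℕ} (μ : Measure (Euc d)) : Euc d := ∫ x, x ∂μ

open Classical in
/-- Relative entropy `H(ρ | η)`, valued in `ℝ≥0∞`. -/
def relEnt {d : ℕ} (ρ η : Measure (Euc d)) : ℝ≥0∞ :=
  if ρ ≪ η ∧ Integrable (fun x => Real.log (ρ.rnDeriv η x).toReal) ρ then
    ENNReal.ofReal (∫ x, Real.log (ρ.rnDeriv η x).toReal ∂ρ)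
  else ⊤

/-- Squared 2-Wasserstein distance. -/
def W2sq {d : ℕ} (μ ν : Measure (Euc d)) : ℝ≥0∞ :=
  ⨅ (π : Measure (Euc d × Euc d)) (_ : π.fst = μ ∧ π.snd = ν),
    ∫⁻ p, ENNReal.ofReal (‖p.1 - p.2‖ ^ 2) ∂π


/-- If `f` is `β`-semiconcave, then `-log(e^{-f} * γ)` is `β/(1+β)`-semiconcave. -/
theorem semiconcavity_of_gaussian_smoothing {d : ℕ} (β : ℝ) (hβ : 0 < β)
    (f : Euc d → ℝ)
    (hf : ConvexOn ℝ Set.univ fun x => β / 2 * ‖x‖ ^ 2 - f x)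
    (hint : ∀ x : Euc d, Integrable fun y => Real.exp (-f (x - y)) * gaussDensity 0 y)
    (hpos : ∀ x : Euc d, 0 < ∫ y, Real.exp (-f (x - y)) * gaussDensity 0 y) :
    ConvexOn ℝ Set.univ fun x : Euc d =>
      β / (2 * (1 + β)) * ‖x‖ ^ 2
        + Real.log (∫ y, Real.exp (-f (x - y)) * gaussDensity 0 y) := by
  have h1β : (0:ℝ) < 1 + β := by linarith
  have h2π : (0:ℝ) < 2 * Real.pi := by positivity
  set K : ℝ := (2 * Real.pi) ^ (-(d : ℝ) / 2) with hK
  have hKpos : 0 < K := Real.rpow_pos_of_pos h2π _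
  set b : ℝ := β / (1 + β) with hb
  set c : ℝ := (1 + β)⁻¹ with hc
  set g : Euc d → ℝ := fun z => β / 2 * ‖z‖ ^ 2 - f z with hg
  set F : Euc d → Euc d → ℝ := fun z y => Real.exp (g (z - y) - (1 + β) / 2 * ‖y‖ ^ 2) with hF
  have hFpos : ∀ z y, 0 < F z y := fun z y => Real.exp_pos _
  set Φ : Euc d → ℝ := fun z => ∫ y, F z y with hΦ
  -- pointwise key identity
  have key : ∀ x y : Euc d, Real.exp (-f (x - y)) * gaussDensity 0 y
      = (K * Real.exp (-(b / 2) * ‖x‖ ^ 2)) * F (c • x) (y - b • x) := by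
    intro x y
    have hvec : c • x - (y - b • x) = x - y := by
      have hcb : c + b = 1 := by rw [hc, hb]; field_simp
      have h1 : c • x - (y - b • x) = (c + b) • x - y := by module
      rw [h1, hcb, one_smul]
    have hnorm : ‖y - b • x‖ ^ 2 = ‖y‖ ^ 2 - 2 * b * ⟪x, y⟫ + b ^ 2 * ‖x‖ ^ 2 := by
      rw [norm_sub_sq_real, real_inner_smul_right, norm_smul, real_inner_comm, mul_pow,
        Real.norm_eq_abs, sq_abs]
      ring
    have hexp : -f (x - y) + -‖y - 0‖ ^ 2 / 2
        = -(b / 2) * ‖x‖ ^ 2 + (g (x - y) - (1 + β) / 2 * ‖y - b • x‖ ^ 2) := by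
      rw [hg]
      simp only [sub_zero]
      rw [hnorm, norm_sub_sq_real, hb]
      field_simp
      ring
    rw [hF]
    simp only [hvec]
    rw [gaussDensity, ← hK, ← mul_assoc, mul_comm (Real.exp _) K, mul_assoc, ← Real.exp_add,
      mul_assoc, ← Real.exp_add, hexp]
  -- integrability of F (c • x)
  have hIF : ∀ x : Euc d, Integrable (F (c • x)) := by
    intro x
    have h1 : Integrable (fun y => Real.exp (-f (x - (y + b • x))) * gaussDensity 0 (y + b • x))
        volume := (hint x).comp_add_right (b • x)
    have h2 := h1.const_mul (K * Real.exp (-(b / 2) * ‖x‖ ^ 2))⁻¹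
    have heq : (fun y => (K * Real.exp (-(b / 2) * ‖x‖ ^ 2))⁻¹ *
        (Real.exp (-f (x - (y + b • x))) * gaussDensity 0 (y + b • x))) = F (c • x) := by
      funext y
      rw [key x (y + b • x), add_sub_cancel_right, ← mul_assoc, inv_mul_cancel₀ (by positivity),
        one_mul]
    rwa [heq] at h2
  -- the integral identity
  have hInt_eq : ∀ x : Euc d, (∫ y, Real.exp (-f (x - y)) * gaussDensity 0 y)
      = (K * Real.exp (-(b / 2) * ‖x‖ ^ 2)) * Φ (c • x) := by
    intro x
    calc (∫ y, Real.exp (-f (x - y)) * gaussDensity 0 y)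
        = ∫ y, (K * Real.exp (-(b / 2) * ‖x‖ ^ 2)) * F (c • x) (y - b • x) := by
          simp_rw [key x]
      _ = (K * Real.exp (-(b / 2) * ‖x‖ ^ 2)) * ∫ y, F (c • x) (y - b • x) :=
          integral_const_mul _ _
      _ = (K * Real.exp (-(b / 2) * ‖x‖ ^ 2)) * Φ (c • x) := by
          rw [hΦ]
          simp only
          rw [integral_sub_right_eq_self (fun y => F (c • x) y) (b • x)]
  -- positivity of Φ (c • x)
  have hΦpos : ∀ x : Euc d, 0 < Φ (c • x) := by
    intro x
    have h1 := hpos x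
    rw [hInt_eq x] at h1
    have hC : 0 < K * Real.exp (-(b / 2) * ‖x‖ ^ 2) := by positivity
    nlinarith [h1, hC]
  -- representation via lintegral
  have hrepr : ∀ x : Euc d, Φ (c • x) = (∫⁻ y, ENNReal.ofReal (F (c • x) y)).toReal := by
    intro x
    rw [hΦ]
    simp only
    rw [integral_eq_lintegral_of_nonneg_ae
      (Filter.Eventually.of_forall fun y => (hFpos _ y).le) (hIF x).aestronglyMeasurable]
  -- convexity of x ↦ log (Φ (c • x))
  have hconv : ConvexOn ℝ Set.univ fun x : Euc d => Real.log (Φ (c • x)) := by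
    refine ⟨convex_univ, fun x0 _ x1 _ t s ht hs hts => ?_⟩
    rcases eq_or_lt_of_le ht with ht0 | ht0
    · have hs1 : s = 1 := by linarith
      simp [← ht0, hs1]
    rcases eq_or_lt_of_le hs with hs0 | hs0
    · have ht1 : t = 1 := by linarith
      simp [← hs0, ht1]
    have ht1 : t < 1 := by linarith
    set x2 : Euc d := t • x0 + s • x1 with hx2
    have hsmul : c • x2 = t • (c • x0) + s • (c • x1) := by
      rw [hx2]
      module
    -- pointwise Hölder bound
    have hpt : ∀ y, F (c • x2) y ≤ (F (c • x0) y) ^ t * (F (c • x1) y) ^ s := by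
      intro y
      have hz : c • x2 - y = t • (c • x0 - y) + s • (c • x1 - y) := by
        have h' : t • y + s • y = y := by rw [← add_smul, hts, one_smul]
        calc c • x2 - y = t • (c • x0) + s • (c • x1) - (t • y + s • y) := by rw [hsmul, h']
          _ = t • (c • x0 - y) + s • (c • x1 - y) := by rw [smul_sub, smul_sub]; abel
      have hgc := hf.2 (Set.mem_univ (c • x0 - y)) (Set.mem_univ (c • x1 - y)) ht0.le hs0.le hts
      rw [smul_eq_mul, smul_eq_mul] at hgc
      have h3 : t * ((1 + β) / 2 * ‖y‖ ^ 2) + s * ((1 + β) / 2 * ‖y‖ ^ 2)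
          = (1 + β) / 2 * ‖y‖ ^ 2 := by rw [← add_mul, hts, one_mul]
      calc F (c • x2) y
          = Real.exp (g (c • x2 - y) - (1 + β) / 2 * ‖y‖ ^ 2) := by rw [hF]
        _ ≤ Real.exp ((g (c • x0 - y) - (1 + β) / 2 * ‖y‖ ^ 2) * t
              + (g (c • x1 - y) - (1 + β) / 2 * ‖y‖ ^ 2) * s) := by
            apply Real.exp_le_exp.mpr
            rw [hz]
            have h4 : (g (c • x0 - y) - (1 + β) / 2 * ‖y‖ ^ 2) * t
                + (g (c • x1 - y) - (1 + β) / 2 * ‖y‖ ^ 2) * s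
                = t * g (c • x0 - y) + s * g (c • x1 - y)
                  - (t * ((1 + β) / 2 * ‖y‖ ^ 2) + s * ((1 + β) / 2 * ‖y‖ ^ 2)) := by ring
            rw [h4, h3]
            exact sub_le_sub_right hgc _
        _ = (F (c • x0) y) ^ t * (F (c • x1) y) ^ s := by
            rw [Real.exp_add, Real.exp_mul, Real.exp_mul, hF]
    -- lintegral data
    have hI0 := hIF x0
    have hI1 := hIF x1
    have hIt := hIF x2
    have m0 : AEMeasurable (fun y => ENNReal.ofReal (F (c • x0) y)) volume :=
      ENNReal.measurable_ofReal.comp_aemeasurable hI0.aestronglyMeasurable.aemeasurable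
    have m1 : AEMeasurable (fun y => ENNReal.ofReal (F (c • x1) y)) volume :=
      ENNReal.measurable_ofReal.comp_aemeasurable hI1.aestronglyMeasurable.aemeasurable
    set A : ℝ≥0∞ := ∫⁻ y, ENNReal.ofReal (F (c • x0) y) with hA
    set B : ℝ≥0∞ := ∫⁻ y, ENNReal.ofReal (F (c • x1) y) with hB
    have hAfin : A ≠ ⊤ := hI0.lintegral_lt_top.ne
    have hBfin : B ≠ ⊤ := hI1.lintegral_lt_top.ne
    have hconj : Real.HolderConjugate t⁻¹ s⁻¹ := by
      constructor
      · rw [inv_inv, inv_inv, inv_one]; exact hts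
      · exact inv_pos.mpr ht0
      · exact inv_pos.mpr hs0
    have hHolder : (∫⁻ y, ENNReal.ofReal (F (c • x2) y)) ≤ A ^ t * B ^ s := by
      calc (∫⁻ y, ENNReal.ofReal (F (c • x2) y))
          ≤ ∫⁻ y, ((fun y => ENNReal.ofReal (F (c • x0) y) ^ t) *
              (fun y => ENNReal.ofReal (F (c • x1) y) ^ s)) y := by
            apply lintegral_mono
            intro y
            calc ENNReal.ofReal (F (c • x2) y)
                ≤ ENNReal.ofReal ((F (c • x0) y) ^ t * (F (c • x1) y) ^ s) :=
                  ENNReal.ofReal_le_ofReal (hpt y)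
              _ = ENNReal.ofReal (F (c • x0) y) ^ t * ENNReal.ofReal (F (c • x1) y) ^ s := by
                  rw [ENNReal.ofReal_mul (Real.rpow_nonneg (hFpos _ _).le _),
                    ENNReal.ofReal_rpow_of_pos (hFpos _ _),
                    ENNReal.ofReal_rpow_of_pos (hFpos _ _)]
        _ ≤ (∫⁻ y, (ENNReal.ofReal (F (c • x0) y) ^ t) ^ t⁻¹) ^ (1 / t⁻¹)
              * (∫⁻ y, (ENNReal.ofReal (F (c • x1) y) ^ s) ^ s⁻¹) ^ (1 / s⁻¹) :=
            ENNReal.lintegral_mul_le_Lp_mul_Lq volume hconj (m0.pow_const _) (m1.pow_const _)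
        _ = A ^ t * B ^ s := by
            simp_rw [← ENNReal.rpow_mul, mul_inv_cancel₀ ht0.ne', mul_inv_cancel₀ hs0.ne',
              ENNReal.rpow_one, one_div, inv_inv]
            rfl
    have hfin : A ^ t * B ^ s ≠ ⊤ :=
      ENNReal.mul_ne_top (ENNReal.rpow_ne_top_of_nonneg ht0.le hAfin)
        (ENNReal.rpow_ne_top_of_nonneg hs0.le hBfin)
    have hle : Φ (c • x2) ≤ Φ (c • x0) ^ t * Φ (c • x1) ^ s := by
      rw [hrepr x2, hrepr x0, hrepr x1]
      calc (∫⁻ y, ENNReal.ofReal (F (c • x2) y)).toReal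
          ≤ (A ^ t * B ^ s).toReal := ENNReal.toReal_mono hfin hHolder
        _ = A.toReal ^ t * B.toReal ^ s := by
            rw [ENNReal.toReal_mul, ENNReal.toReal_rpow, ENNReal.toReal_rpow]
    have h0 := hΦpos x0
    have h1 := hΦpos x1
    have h2 := hΦpos x2
    have hfinal : Real.log (Φ (c • x2)) ≤ t * Real.log (Φ (c • x0)) + s * Real.log (Φ (c • x1)) := by
      calc Real.log (Φ (c • x2))
          ≤ Real.log (Φ (c • x0) ^ t * Φ (c • x1) ^ s) := Real.log_le_log h2 hle
        _ = t * Real.log (Φ (c • x0)) + s * Real.log (Φ (c • x1)) := by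
            rw [Real.log_mul (Real.rpow_pos_of_pos h0 t).ne' (Real.rpow_pos_of_pos h1 s).ne',
              Real.log_rpow h0, Real.log_rpow h1]
    simpa [smul_eq_mul, ← hx2] using hfinal
  -- final assembly
  have hfun : (fun x : Euc d => β / (2 * (1 + β)) * ‖x‖ ^ 2
      + Real.log (∫ y, Real.exp (-f (x - y)) * gaussDensity 0 y))
      = fun x : Euc d => Real.log K + Real.log (Φ (c • x)) := by
    funext x
    have hb2 : β / (2 * (1 + β)) = b / 2 := by rw [hb, div_div, mul_comm]
    rw [hInt_eq x, Real.log_mul (by positivity) (hΦpos x).ne',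
      Real.log_mul hKpos.ne' (Real.exp_pos _).ne', Real.log_exp, hb2]
    ring
  rw [hfun]
  exact (convexOn_const _ convex_univ).add hconv
end
end

section
/- Let $\beta > 0$ and let $g : \mathbb{R}^d \to \mathbb{R}$ be such that $h := q_{\beta/(1+\beta)} - g$ is convex, where $q_c(x) := \tfrac{c}{2}|x|^2$. Then the function $u(x) := \tfrac12|x|^2 - \tfrac{1}{\beta}\, (q_\beta \Box (-g))(x)$, where $(q_\beta \Box (-g))(x) := \inf_{y} \{\tfrac{\beta}{2}|x-y|^2 - g(y)\}$, is convex and $\tfrac{1+\beta}{\beta}$-smooth; in particular, $u$ is differentiable and $\nabla u$ is $\tfrac{1+\beta}{\beta}$-Lipschitz. -/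
open MeasureTheory ProbabilityTheory Filter Topology Set
open scoped ENNReal RealInnerProductSpace

noncomputable section

set_option maxHeartbeats 1000000 in
/-- If `g` is `β/(1+β)`-semiconcave then `q₁ - (1/β) (q_β □ (-g))` is convex and
`(1+β)/β`-smooth. -/
theorem smoothness_of_infConv {d : ℕ} (β : ℝ) (hβ : 0 < β) (g : Euc d → ℝ)
    (hg : ConvexOn ℝ Set.univ fun x => β / (1 + β) / 2 * ‖x‖ ^ 2 - g x)
    (hbdd : ∀ x : Euc d, BddBelow (Set.range fun y => β / 2 * ‖x - y‖ ^ 2 - g y)) :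
    ConvexOn ℝ Set.univ
      (fun x : Euc d => 1 / 2 * ‖x‖ ^ 2 - 1 / β * ⨅ y : Euc d, (β / 2 * ‖x - y‖ ^ 2 - g y)) ∧
    ∃ u' : Euc d → Euc d,
      (∀ x, HasGradientAt
        (fun x : Euc d => 1 / 2 * ‖x‖ ^ 2 - 1 / β * ⨅ y : Euc d, (β / 2 * ‖x - y‖ ^ 2 - g y))
        (u' x) x) ∧
      LipschitzWith (Real.toNNReal ((1 + β) / β)) u' := by
  have h1β : (0:ℝ) < 1 + β := by linarith
  set m : ℝ := β / (1 + β) with hm_def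
  have hm : 0 < m := div_pos hβ h1β
  set ψ : Euc d → ℝ := fun y => ‖y‖ ^ 2 / 2 - g y / β with hψ_def
  set U : Euc d → ℝ :=
    fun x : Euc d => 1 / 2 * ‖x‖ ^ 2 - 1 / β * ⨅ y : Euc d, (β / 2 * ‖x - y‖ ^ 2 - g y)
    with hU_def
  set F : Euc d → Euc d → ℝ := fun x y => ψ y - ⟪x, y⟫ with hF_def
  -- key algebraic identity
  have key : ∀ x y : Euc d, β / 2 * ‖x - y‖ ^ 2 - g y = β / 2 * ‖x‖ ^ 2 + β * F x y := by
    intro x y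
    simp only [hF_def, hψ_def, norm_sub_sq_real]
    field_simp
    ring
  -- continuity of g and ψ
  have hgcont : Continuous g := by
    have h1 : Continuous fun x : Euc d => β / (1 + β) / 2 * ‖x‖ ^ 2 - g x := by
      exact continuousOn_univ.mp (hg.continuousOn isOpen_univ)
    have : Continuous fun x : Euc d => β / (1 + β) / 2 * ‖x‖ ^ 2 := by continuity
    have := this.sub h1
    simpa [Pi.sub_def] using this
  have hFcont : ∀ x, Continuous (F x) := by
    intro x
    apply Continuous.sub
    · exact Continuous.sub (by continuity) (hgcont.div_const β)
    · exact continuous_const.inner continuous_id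
  -- strong convexity of F x
  have hFsc : ∀ x, StrongConvexOn univ m (F x) := by
    intro x
    rw [strongConvexOn_iff_convex]
    have heq : (fun y : Euc d => F x y - m / 2 * ‖y‖ ^ 2)
        = fun y => (1/β) * (β / (1 + β) / 2 * ‖y‖ ^ 2 - g y) + -⟪x, y⟫ := by
      funext y
      simp only [hF_def, hψ_def, hm_def]
      field_simp
      ring
    rw [heq]
    refine ConvexOn.add ?_ ?_
    · have := hg.smul (c := 1/β) (by positivity)
      simpa [smul_eq_mul] using this
    · refine ⟨convex_univ, fun a _ b _ s t hs ht hst => ?_⟩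
      simp only [inner_add_right, real_inner_smul_right, smul_eq_mul]
      apply le_of_eq; ring
  -- bddBelow of F x
  have hFbdd : ∀ x, ∃ b : ℝ, ∀ y, b ≤ F x y := by
    intro x
    obtain ⟨b, hb⟩ := hbdd x
    refine ⟨(b - β / 2 * ‖x‖ ^ 2) / β, fun y => ?_⟩
    have hby : b ≤ β / 2 * ‖x - y‖ ^ 2 - g y := hb ⟨y, rfl⟩
    rw [key x y] at hby
    rw [div_le_iff₀ hβ]
    linarith [hby]
  clear_value m ψ F U
  -- existence of global minimizer of F x
  have exists_min : ∀ x : Euc d, ∃ y : Euc d, ∀ z, F x y ≤ F x z := by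
    intro x
    obtain ⟨b, hb⟩ := hFbdd x
    set R : ℝ := Real.sqrt ((8 / m) * (F x 0 - b) + 1) with hR_def
    have hR0 : 0 ≤ R := Real.sqrt_nonneg _
    have hRsq : (8 / m) * (F x 0 - b) + 1 = R ^ 2 := by
      rw [hR_def, Real.sq_sqrt]
      have h8 : (0:ℝ) ≤ 8 / m := by positivity
      have := mul_nonneg h8 (by linarith [hb 0] : (0:ℝ) ≤ F x 0 - b)
      linarith
    -- coercivity: outside ball, F x y ≥ F x 0
    have coer : ∀ y : Euc d, R < ‖y‖ → F x 0 ≤ F x y := by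
      intro y hy
      have hsc := (hFsc x).2 (mem_univ y) (mem_univ (0 : Euc d))
        (by norm_num : (0:ℝ) ≤ 1/2) (by norm_num : (0:ℝ) ≤ 1/2) (by norm_num)
      simp only [smul_eq_mul, smul_zero, add_zero, sub_zero] at hsc
      have hmid : b ≤ F x ((1/2 : ℝ) • y) := hb _
      have hy2 : R ^ 2 < ‖y‖ ^ 2 := by nlinarith
      rw [← hRsq] at hy2
      have hmul : m * (8 / m * (F x 0 - b) + 1) < m * ‖y‖ ^ 2 := (mul_lt_mul_iff_right₀ hm).mpr hy2
      have hsimp : m * (8 / m * (F x 0 - b) + 1) = 8 * (F x 0 - b) + m := by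
        field_simp
      rw [hsimp] at hmul
      by_contra hcon
      push_neg at hcon
      nlinarith [hsc, hmid, hmul, hcon, hm]
    obtain ⟨y₀, hy₀mem, hy₀min⟩ := (isCompact_closedBall (0 : Euc d) R).exists_isMinOn
      ⟨0, by simp [hR0]⟩ ((hFcont x).continuousOn)
    refine ⟨y₀, fun z => ?_⟩
    by_cases hz : z ∈ Metric.closedBall (0 : Euc d) R
    · exact hy₀min hz
    · have h0 : F x y₀ ≤ F x 0 := hy₀min (by simp [hR0])
      have : R < ‖z‖ := by
        simpa [Metric.mem_closedBall, dist_eq_norm, not_le] using hz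
      exact h0.trans (coer z this)
  set Y : Euc d → Euc d := fun x => Classical.choose (exists_min x) with hY_def
  have hYmin : ∀ x z, F x (Y x) ≤ F x z := fun x => Classical.choose_spec (exists_min x)
  -- strong minimality
  have hstrong : ∀ x z, F x (Y x) + m / 2 * ‖z - Y x‖ ^ 2 ≤ F x z := by
    intro x z
    have htend : Tendsto (fun t : ℝ => F x (Y x) + (1 - t) * (m / 2 * ‖z - Y x‖ ^ 2))
        (𝓝[>] (0:ℝ)) (𝓝 (F x (Y x) + (1 - 0) * (m / 2 * ‖z - Y x‖ ^ 2))) := by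
      apply Tendsto.mono_left _ nhdsWithin_le_nhds
      exact Tendsto.const_add _ (((continuous_const.sub continuous_id).mul
        continuous_const).tendsto 0)
    have hev : ∀ᶠ t in 𝓝[>] (0:ℝ),
        F x (Y x) + (1 - t) * (m / 2 * ‖z - Y x‖ ^ 2) ≤ F x z := by
      filter_upwards [Ioo_mem_nhdsGT_of_mem (by constructor <;> norm_num :
        (0:ℝ) ∈ Ico 0 1)] with t ht
      obtain ⟨ht0, ht1⟩ := ht
      have hsc := (hFsc x).2 (mem_univ z) (mem_univ (Y x)) ht0.le (by linarith : (0:ℝ) ≤ 1 - t)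
        (by ring)
      have hmin := hYmin x (t • z + (1 - t) • Y x)
      simp only [smul_eq_mul] at hsc
      nlinarith [hsc, hmin]
    have := le_of_tendsto htend hev
    simpa using this
  -- Lipschitz bound for Y
  have hYlip : ∀ x₁ x₂, m * ‖Y x₁ - Y x₂‖ ≤ ‖x₁ - x₂‖ := by
    intro x₁ x₂
    have h1 := hstrong x₁ (Y x₂)
    have h2 := hstrong x₂ (Y x₁)
    have hsum : m * ‖Y x₁ - Y x₂‖ ^ 2 ≤ ⟪x₁ - x₂, Y x₁ - Y x₂⟫ := by
      have hd : (F x₁ (Y x₂) - F x₂ (Y x₂)) + (F x₂ (Y x₁) - F x₁ (Y x₁))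
          = ⟪x₁ - x₂, Y x₁ - Y x₂⟫ := by
        simp only [hF_def, inner_sub_left, inner_sub_right]
        ring
      have hrev2 : m / 2 * ‖Y x₂ - Y x₁‖ ^ 2 = m / 2 * ‖Y x₁ - Y x₂‖ ^ 2 := by
        rw [norm_sub_rev]
      linarith [h1, h2, hrev2, hd]
    have hcs := real_inner_le_norm (x₁ - x₂) (Y x₁ - Y x₂)
    rcases eq_or_lt_of_le (norm_nonneg (Y x₁ - Y x₂)) with h | h
    · rw [← h, mul_zero]
      exact norm_nonneg _
    · nlinarith [hsum, hcs]
  -- value of U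
  have hUval : ∀ x, U x = ⟪x, Y x⟫ - ψ (Y x) := by
    intro x
    have hinf : (⨅ y : Euc d, (β / 2 * ‖x - y‖ ^ 2 - g y)) = β / 2 * ‖x‖ ^ 2 + β * F x (Y x) := by
      apply le_antisymm
      · have := ciInf_le (hbdd x) (Y x)
        rwa [key x (Y x)] at this
      · apply le_ciInf
        intro y
        rw [key x y]
        have := hYmin x y
        nlinarith
    simp only [hU_def, hinf, hF_def]
    field_simp
    ring
  have hUge : ∀ x y, ⟪x, y⟫ - ψ y ≤ U x := by
    intro x y
    rw [hUval x]
    have := hYmin x y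
    simp only [hF_def] at this
    linarith
  constructor
  · refine ⟨convex_univ, fun a _ b _ s t hs ht hst => ?_⟩
    have h1 := hUge a (Y (s • a + t • b))
    have h2 := hUge b (Y (s • a + t • b))
    rw [hUval (s • a + t • b)]
    simp only [inner_add_left, real_inner_smul_left, smul_eq_mul]
    have hψw : s * ψ (Y (s • a + t • b)) + t * ψ (Y (s • a + t • b)) = ψ (Y (s • a + t • b)) := by
      rw [← add_mul, hst, one_mul]
    linarith [mul_le_mul_of_nonneg_left h1 hs, mul_le_mul_of_nonneg_left h2 ht, hψw]
  · refine ⟨Y, fun x => ?_, ?_⟩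
    · rw [hasGradientAt_iff_isLittleO, Asymptotics.isLittleO_iff]
      intro ε hε
      filter_upwards [Metric.ball_mem_nhds x (by positivity : (0:ℝ) < ε * m)] with x' hx'
      rw [Metric.mem_ball, dist_eq_norm] at hx'
      have hlow : 0 ≤ U x' - U x - ⟪Y x, x' - x⟫ := by
        have h1 := hUge x' (Y x)
        have e : ⟪Y x, x' - x⟫ = ⟪x', Y x⟫ - ⟪x, Y x⟫ := by
          rw [real_inner_comm, inner_sub_left]
        rw [hUval x, e]
        linarith
      have hup : U x' - U x - ⟪Y x, x' - x⟫ ≤ (1/m) * ‖x' - x‖ ^ 2 := by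
        have h1 := hUge x (Y x')
        have hsplit : ⟪x', Y x'⟫ - ⟪x, Y x'⟫ - ⟪x' - x, Y x⟫ = ⟪x' - x, Y x' - Y x⟫ := by
          simp only [inner_sub_left, inner_sub_right]
        have hbound : ⟪x' - x, Y x' - Y x⟫ ≤ (1/m) * ‖x' - x‖ ^ 2 := by
          rw [div_mul_eq_mul_div, one_mul, le_div_iff₀ hm]
          have hcs := real_inner_le_norm (x' - x) (Y x' - Y x)
          have hlip := hYlip x' x
          nlinarith [mul_le_mul_of_nonneg_left hlip (norm_nonneg (x' - x)),
            mul_le_mul_of_nonneg_right hcs hm.le, norm_nonneg (x' - x)]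
        rw [hUval x', real_inner_comm (x' - x) (Y x)]
        linarith
      have hn : ‖U x' - U x - ⟪Y x, x' - x⟫‖ ≤ (1/m) * ‖x' - x‖ ^ 2 := by
        rw [Real.norm_eq_abs, abs_of_nonneg hlow]; exact hup
      calc ‖U x' - U x - ⟪Y x, x' - x⟫‖ ≤ (1/m) * ‖x' - x‖ ^ 2 := hn
      _ ≤ ε * ‖x' - x‖ := by
          rw [pow_two, ← mul_assoc]
          apply mul_le_mul_of_nonneg_right _ (norm_nonneg _)
          rw [div_mul_eq_mul_div, one_mul, div_le_iff₀ hm]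
          nlinarith [norm_nonneg (x' - x)]
    · have hLval : ((1 + β) / β : ℝ) = 1 / m := by
        rw [hm_def]; field_simp
      rw [lipschitzWith_iff_dist_le_mul]
      intro x₁ x₂
      rw [dist_eq_norm, dist_eq_norm]
      rw [Real.coe_toNNReal _ (by positivity : (0:ℝ) ≤ (1 + β)/β), hLval]
      rw [div_mul_eq_mul_div, one_mul, le_div_iff₀ hm]
      calc ‖Y x₁ - Y x₂‖ * m = m * ‖Y x₁ - Y x₂‖ := by ring
      _ ≤ ‖x₁ - x₂‖ := hYlip x₁ x₂
end
end

section
/- Let $\mathcal{X}, \mathcal{Y}$ be Polish spaces, $p \ge 1$, and let $C : \mathcal{X} \times \mathcal{P}_p(\mathcal{Y}) \to \mathbb{R} \cup \{+\infty\}$ be lower semicontinuous, bounded below, and convex in its second argument. Then the weak transport value $W(\mu,\nu) := \inf_{\pi \in \mathrm{Cpl}(\mu,\nu)} \int C(x,\pi_x)\,\mu(dx)$ is jointly convex: for all $\lambda \in [0,1]$, $\mu_1,\mu_2 \in \mathcal{P}_p(\mathcal{X})$, $\nu_1,\nu_2 \in \mathcal{P}_p(\mathcal{Y})$, $W(\lambda\mu_1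 + (1-\lambda)\mu_2,\ \lambda\nu_1 + (1-\lambda)\nu_2) \le \lambda W(\mu_1,\nu_1) + (1-\lambda)W(\mu_2,\nu_2)$. -/
open MeasureTheory ProbabilityTheory Filter Topology Set
open scoped ENNReal

noncomputable section

variable {X Y : Type*}
  [MetricSpace X] [CompleteSpace X] [SecondCountableTopology X]
  [MeasurableSpace X] [BorelSpace X]
  [MetricSpace Y] [CompleteSpace Y] [SecondCountableTopology Y]
  [MeasurableSpace Y] [BorelSpace Y] [Nonempty Y]

section WOTAuxSection

open Metric
open scoped NNReal BoundedContinuousFunction Classical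

namespace WOTAux

variable {Y : Type*} [MetricSpace Y] [SecondCountableTopology Y]
  [MeasurableSpace Y] [OpensMeasurableSpace Y] [Nonempty Y]

/-- A finitely supported probability measure with prescribed (rational) weights, used to build a
countable dense subset of the space of probability measures. -/
def ratPM (y₀ : Y) {n : ℕ} (y : Fin n → Y) (q : Fin n → ℚ) : ProbabilityMeasure Y :=
  if h : (∑ i, ENNReal.ofReal (q i)) = 1 then
    ⟨∑ i, ENNReal.ofReal (q i) • Measure.dirac (y i), by
      constructor
      rw [Measure.finset_sum_apply]
      simpa using h⟩
  else ⟨Measure.dirac y₀, inferInstance⟩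

lemma ratPM_coe (y₀ : Y) {n : ℕ} (y : Fin n → Y) (q : Fin n → ℚ)
    (h : (∑ i, ENNReal.ofReal (q i)) = 1) :
    (ratPM y₀ y q : Measure Y) = ∑ i, ENNReal.ofReal (q i) • Measure.dirac (y i) := by
  simp only [ratPM, dif_pos h]
  exact congrArg Subtype.val (dif_pos h)

lemma ratPM_apply (y₀ : Y) {n : ℕ} (y : Fin n → Y) (q : Fin n → ℚ)
    (h : (∑ i, ENNReal.ofReal (q i)) = 1) {B : Set Y} (hB : MeasurableSet B) :
    (ratPM y₀ y q : Measure Y) B = ∑ i, if y i ∈ B then ENNReal.ofReal (q i) else 0 := by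
  rw [ratPM_coe y₀ y q h, Measure.finset_sum_apply]
  refine Finset.sum_congr rfl fun i _ => ?_
  rw [Measure.smul_apply, Measure.dirac_apply' _ hB]
  by_cases hyB : y i ∈ B
  · simp [hyB, indicator_of_mem]
  · simp [hyB]

/-- The countable candidate set. -/
def ratPMSet (y₀ : Y) (D : Set Y) : Set (ProbabilityMeasure Y) :=
  ⋃ (n : ℕ), (fun p : (Fin n → Y) × (Fin n → ℚ) => ratPM y₀ p.1 p.2) ''
    {p | ∀ i, p.1 i ∈ D}

lemma ratPMSet_countable (y₀ : Y) {D : Set Y} (hD : D.Countable) :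
    (ratPMSet y₀ D).Countable := by
  refine countable_iUnion fun n => Countable.image ?_ _
  have hsub : {p : (Fin n → Y) × (Fin n → ℚ) | ∀ i, p.1 i ∈ D} ⊆
      {y : Fin n → Y | ∀ i, y i ∈ D} ×ˢ (univ : Set (Fin n → ℚ)) := by
    intro p hp; exact ⟨hp, mem_univ _⟩
  refine Set.Countable.mono hsub (Set.Countable.prod ?_ countable_univ)
  haveI := hD.to_subtype
  have : {y : Fin n → Y | ∀ i, y i ∈ D} =
      Set.range (fun f : Fin n → D => fun i => (f i : Y)) := by
    ext y
    constructor
    · intro hy; exact ⟨fun i => ⟨y i, hy i⟩, rfl⟩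
    · rintro ⟨f, rfl⟩ i; exact (f i).2
  rw [this]
  exact countable_range _

/-- Quantitative approximation of a probability measure by an element of the candidate set,
in Lévy-Prokhorov distance. -/
lemma exists_ratPM_levyProkhorovEDist_le (y₀ : Y) {D : Set Y} (hy₀ : y₀ ∈ D) (hDd : Dense D)
    (P : ProbabilityMeasure Y) {δ : ℝ} (hδ : 0 < δ) :
    ∃ Q ∈ ratPMSet y₀ D,
      levyProkhorovEDist (P : Measure Y) (Q : Measure Y) ≤ ENNReal.ofReal δ := by
  have h8 : 0 < δ / 8 := by linarith
  obtain ⟨Es, Es_mble, Es_bdd, Es_diam, Es_cover, Es_disj⟩ :=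
    SeparableSpace.exists_measurable_partition_diam_le Y h8
  -- choose a large enough finite part of the partition
  set V : ℕ → Set Y := fun N => ⋃ i ∈ Finset.range N, Es i with hV
  have V_mble : ∀ N, MeasurableSet (V N) :=
    fun N => (Finset.range N).measurableSet_biUnion fun i _ => Es_mble i
  have V_mono : Monotone V := fun m n hmn =>
    Set.biUnion_subset_biUnion_left (Finset.range_subset_range.2 hmn)
  have V_union : ⋃ N, V N = univ := by
    rw [← Es_cover]
    apply subset_antisymm
    · exact iUnion_subset fun N => iUnion₂_subset fun i _ => subset_iUnion Es i
    · exact iUnion_subset fun i => subset_iUnion_of_subset (i + 1)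
        (subset_biUnion_of_mem (Finset.self_mem_range_succ i))
  have hlim : Tendsto (fun N => (P : Measure Y) (V N)) atTop (𝓝 1) := by
    have h := tendsto_measure_iUnion_atTop (μ := (P : Measure Y)) V_mono
    rwa [V_union, measure_univ] at h
  have hev : ∀ᶠ N in atTop,
      (1 : ℝ≥0∞) < (P : Measure Y) (V N) + ENNReal.ofReal (δ / 8) := by
    have h1 : (1 : ℝ≥0∞) < 1 + ENNReal.ofReal (δ / 8) :=
      ENNReal.lt_add_right ENNReal.one_ne_top (ENNReal.ofReal_pos.2 h8).ne'
    exact (hlim.add tendsto_const_nhds).eventually (lt_mem_nhds h1)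
  obtain ⟨N0, hN0⟩ := hev.exists
  set M := N0 + 1 with hM
  have hMpos : 0 < M := Nat.succ_pos N0
  have hVM : (1 : ℝ≥0∞) ≤ (P : Measure Y) (V M) + ENNReal.ofReal (δ / 8) :=
    le_trans hN0.le (add_le_add_left (measure_mono (V_mono (Nat.le_succ N0))) _)
  set γ : ℝ := δ / (8 * M) with hγ
  have hγpos : 0 < γ := by
    have : (0:ℝ) < (M:ℝ) := by exact_mod_cast hMpos
    positivity
  -- choose points and rational weights
  have hchoose : ∀ i : Fin M, ∃ (yi : Y) (qi : ℚ), yi ∈ D ∧ 0 ≤ qi ∧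
      (∀ z ∈ Es i, dist z yi ≤ δ / 4) ∧
      ENNReal.ofReal (qi : ℝ) ≤ (P : Measure Y) (Es i) ∧
      (P : Measure Y) (Es i) ≤ ENNReal.ofReal (qi : ℝ) + ENNReal.ofReal γ := by
    intro i
    obtain ⟨yi, hyiD, hyi⟩ : ∃ yi ∈ D, ∀ z ∈ Es (i : ℕ), dist z yi ≤ δ / 4 := by
      rcases eq_empty_or_nonempty (Es i) with he | ⟨z0, hz0⟩
      · exact ⟨y₀, hy₀, by simp [he]⟩
      · have hz0c : z0 ∈ closure D := by rw [hDd.closure_eq]; trivial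
        obtain ⟨yi, hyiD, hdist⟩ := Metric.mem_closure_iff.1 hz0c (δ / 8) h8
        refine ⟨yi, hyiD, fun z hz => ?_⟩
        calc dist z yi ≤ dist z z0 + dist z0 yi := dist_triangle _ _ _
          _ ≤ δ / 8 + δ / 8 := add_le_add
              ((dist_le_diam_of_mem (Es_bdd i) hz hz0).trans (Es_diam i)) hdist.le
          _ ≤ δ / 4 := by linarith
    obtain ⟨qi, hq0, hqle, hqge⟩ : ∃ q : ℚ, 0 ≤ q ∧
        ENNReal.ofReal (q : ℝ) ≤ (P : Measure Y) (Es i) ∧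
        (P : Measure Y) (Es i) ≤ ENNReal.ofReal (q : ℝ) + ENNReal.ofReal γ := by
      set x := (P : Measure Y) (Es i) with hx
      have hxt : x ≠ ⊤ := measure_ne_top _ _
      rcases le_or_gt x.toReal γ with hle | hlt
      · refine ⟨0, le_refl 0, by simp, ?_⟩
        rw [← ENNReal.ofReal_toReal hxt]
        simpa using ENNReal.ofReal_le_ofReal hle
      · obtain ⟨q, hq1, hq2⟩ := exists_rat_btwn (sub_lt_self x.toReal hγpos)
        have hq0' : (0 : ℝ) < q := by
          have := ENNReal.toReal_nonneg (a := x); linarith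
        refine ⟨q, by exact_mod_cast hq0'.le, ?_, ?_⟩
        · rw [← ENNReal.ofReal_toReal hxt]
          exact ENNReal.ofReal_le_ofReal hq2.le
        · rw [← ENNReal.ofReal_toReal hxt,
            ← ENNReal.ofReal_add (by exact_mod_cast hq0'.le) hγpos.le]
          exact ENNReal.ofReal_le_ofReal (by linarith)
    exact ⟨yi, qi, hyiD, hq0, hyi, hqle, hqge⟩
  choose yp qp hypD hqp0 hyclose hqle hqge using hchoose
  set i0 : Fin M := ⟨0, hMpos⟩ with hi0
  set w : Fin M → ℚ :=
    fun i => if i = i0 then 1 - ∑ j ∈ Finset.univ.erase i0, qp j else qp i with hw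
  set s0 : ℝ≥0∞ := ∑ j ∈ Finset.univ.erase i0, ENNReal.ofReal (qp j : ℝ) with hs0
  -- basic sum facts
  have hPVsum : ∑ i : Fin M, (P : Measure Y) (Es i) = (P : Measure Y) (V M) := by
    rw [hV]
    rw [measure_biUnion_finset ?_ (fun i _ => Es_mble i)]
    · exact Fin.sum_univ_eq_sum_range (fun i => (P : Measure Y) (Es i)) M
    · intro i _ j _ hij
      exact Es_disj hij
  have hsum_le_one : ∑ i : Fin M, (P : Measure Y) (Es i) ≤ 1 := by
    rw [hPVsum]; exact prob_le_one
  have hs0_le_Pes : s0 ≤ ∑ j ∈ Finset.univ.erase i0, (P : Measure Y) (Es j) :=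
    Finset.sum_le_sum fun j _ => hqle j
  have hsplit : ∀ f : Fin M → ℝ≥0∞,
      ∑ i : Fin M, f i = f i0 + ∑ j ∈ Finset.univ.erase i0, f j :=
    fun f => (Finset.add_sum_erase _ f (Finset.mem_univ i0)).symm
  have herase_le : (P : Measure Y) (Es i0) +
      ∑ j ∈ Finset.univ.erase i0, (P : Measure Y) (Es j) ≤ 1 := by
    rw [← hsplit (fun j => (P : Measure Y) (Es j))]
    exact hsum_le_one
  have hs0_le_one : s0 ≤ 1 :=
    hs0_le_Pes.trans ((self_le_add_left _ _).trans herase_le)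
  have hqsum_nonneg : (0:ℝ) ≤ ∑ j ∈ Finset.univ.erase i0, (qp j : ℝ) :=
    Finset.sum_nonneg fun j _ => by exact_mod_cast hqp0 j
  have hofReal_qsum : ENNReal.ofReal (∑ j ∈ Finset.univ.erase i0, (qp j : ℝ)) = s0 := by
    rw [ENNReal.ofReal_sum_of_nonneg fun j _ => by exact_mod_cast hqp0 j]
  have hqsum_le_one : ∑ j ∈ Finset.univ.erase i0, (qp j : ℝ) ≤ 1 := by
    have := hs0_le_one
    rw [← hofReal_qsum] at this
    have h1 : ENNReal.ofReal (∑ j ∈ Finset.univ.erase i0, (qp j : ℝ)) ≤ ENNReal.ofReal 1 := by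
      simpa using this
    exact (ENNReal.ofReal_le_ofReal_iff (by norm_num)).1 h1
  have hofwi0 : ENNReal.ofReal (w i0 : ℝ) = 1 - s0 := by
    rw [hw]
    simp only [if_pos rfl]
    push_cast
    rw [ENNReal.ofReal_sub _ hqsum_nonneg, hofReal_qsum, ENNReal.ofReal_one]
  have hofw_ne : ∀ i, i ≠ i0 → ENNReal.ofReal (w i : ℝ) = ENNReal.ofReal (qp i : ℝ) := by
    intro i hi; rw [hw]; simp only [if_neg hi]
  have hwsum : ∑ i : Fin M, ENNReal.ofReal (w i : ℝ) = 1 := by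
    rw [hsplit (fun i => ENNReal.ofReal (w i : ℝ)), hofwi0]
    have : ∑ j ∈ Finset.univ.erase i0, ENNReal.ofReal (w j : ℝ) = s0 := by
      rw [hs0]
      exact Finset.sum_congr rfl fun j hj => hofw_ne j (Finset.ne_of_mem_erase hj)
    rw [this, tsub_add_cancel_of_le hs0_le_one]
  -- cardinal bound for the γ error
  have hcard_gamma : ∀ (s : Finset (Fin M)),
      (s.card : ℝ≥0∞) * ENNReal.ofReal γ ≤ ENNReal.ofReal (δ / 8) := by
    intro s
    have hcard : (s.card : ℝ) ≤ M := by
      exact_mod_cast (s.card_le_univ.trans (by simp))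
    calc (s.card : ℝ≥0∞) * ENNReal.ofReal γ
        = ENNReal.ofReal ((s.card : ℝ) * γ) := by
          rw [ENNReal.ofReal_mul (by positivity)]
          congr 1
          exact (ENNReal.ofReal_natCast _).symm
      _ ≤ ENNReal.ofReal (δ / 8) := by
          apply ENNReal.ofReal_le_ofReal
          rw [hγ]
          have hMr : (0:ℝ) < (M:ℝ) := by exact_mod_cast hMpos
          rw [div_eq_div_iff (by positivity) (by positivity)] at *
          calc (s.card : ℝ) * (δ / (8 * M)) ≤ (M:ℝ) * (δ / (8 * M)) := by
                apply mul_le_mul_of_nonneg_right hcard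
                positivity
            _ = δ / 8 := by field_simp
  -- weight upper bound
  have hw_le : ∀ i : Fin M, ENNReal.ofReal (w i : ℝ) ≤ (P : Measure Y) (Es i) +
      (if i = i0 then ENNReal.ofReal (δ / 4) else 0) := by
    intro i
    by_cases hi : i = i0
    · subst hi
      rw [hofwi0, if_pos rfl]
      rw [tsub_le_iff_right]
      have hA : ∑ j ∈ Finset.univ.erase i0, (P : Measure Y) (Es j) ≤
          s0 + ENNReal.ofReal (δ / 8) := by
        calc ∑ j ∈ Finset.univ.erase i0, (P : Measure Y) (Es j)
            ≤ ∑ j ∈ Finset.univ.erase i0,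
                (ENNReal.ofReal (qp j : ℝ) + ENNReal.ofReal γ) :=
              Finset.sum_le_sum fun j _ => hqge j
          _ = s0 + (Finset.univ.erase i0).card • ENNReal.ofReal γ := by
              rw [Finset.sum_add_distrib, Finset.sum_const]
          _ ≤ s0 + ENNReal.ofReal (δ / 8) := by
              rw [nsmul_eq_mul]
              exact add_le_add_right (hcard_gamma _) _
      have hhalf : ENNReal.ofReal (δ / 8) + ENNReal.ofReal (δ / 8) = ENNReal.ofReal (δ / 4) := by
        rw [← ENNReal.ofReal_add (by linarith) (by linarith)]
        congr 1
        ring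
      calc (1:ℝ≥0∞) ≤ (P : Measure Y) (V M) + ENNReal.ofReal (δ / 8) := hVM
        _ = ((P : Measure Y) (Es i0) + ∑ j ∈ Finset.univ.erase i0, (P : Measure Y) (Es j))
              + ENNReal.ofReal (δ / 8) := by
            rw [← hPVsum, hsplit (fun j => (P : Measure Y) (Es j))]
        _ ≤ ((P : Measure Y) (Es i0) + (s0 + ENNReal.ofReal (δ / 8)))
              + ENNReal.ofReal (δ / 8) := by
            exact add_le_add_left (add_le_add_right hA _) _
        _ = ((P : Measure Y) (Es i0) + s0)
              + (ENNReal.ofReal (δ / 8) + ENNReal.ofReal (δ / 8)) := by ring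
        _ = ((P : Measure Y) (Es i0) + ENNReal.ofReal (δ / 4)) + s0 := by rw [hhalf]; ring
    · rw [hofw_ne i hi, if_neg hi, add_zero]
      exact hqle i
  -- weight lower bound
  have hw_ge : ∀ i : Fin M, (P : Measure Y) (Es i) ≤
      ENNReal.ofReal (w i : ℝ) + ENNReal.ofReal γ := by
    intro i
    by_cases hi : i = i0
    · subst hi
      rw [hofwi0]
      refine le_trans ?_ le_self_add
      apply ENNReal.le_sub_of_add_le_right (by simp [s0])
      calc (P : Measure Y) (Es i0) + s0
          ≤ (P : Measure Y) (Es i0) + ∑ j ∈ Finset.univ.erase i0, (P : Measure Y) (Es j) :=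
            add_le_add_right hs0_le_Pes _
        _ ≤ 1 := herase_le
    · rw [hofw_ne i hi]
      exact hqge i
  -- the candidate measure
  set Q := ratPM y₀ yp w with hQ
  have hQmem : Q ∈ ratPMSet y₀ D := by
    exact mem_iUnion.2 ⟨M, ⟨(yp, w), fun i => hypD i, rfl⟩⟩
  have hQap : ∀ B : Set Y, MeasurableSet B →
      (Q : Measure Y) B = ∑ i, if yp i ∈ B then ENNReal.ofReal (w i : ℝ) else 0 :=
    fun B hB => ratPM_apply y₀ yp w hwsum hB
  refine ⟨Q, hQmem, ?_⟩
  apply levyProkhorovEDist_le_of_forall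
  intro ε B hεδ hεtop hB
  have hδε : δ < ε.toReal := by
    have h1 := ENNReal.toReal_strict_mono hεtop.ne hεδ
    rwa [ENNReal.toReal_ofReal hδ.le] at h1
  set t := ε.toReal with ht
  have hofδε : ENNReal.ofReal δ ≤ ε := hεδ.le
  constructor
  · -- P B ≤ Q (thickening) + ε
    have step1 : (P : Measure Y) B ≤
        ∑ i : Fin M, (P : Measure Y) (B ∩ Es i) + ENNReal.ofReal (δ / 8) := by
      refine (measure_le_inter_add_diff _ B (V M)).trans (add_le_add ?_ ?_)
      · have hBV : B ∩ V M = ⋃ i ∈ Finset.range M, (B ∩ Es i) := by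
          rw [hV, inter_iUnion₂]
        rw [hBV, measure_biUnion_finset ?_ (fun i _ => hB.inter (Es_mble i))]
        · rw [← Fin.sum_univ_eq_sum_range (fun i => (P : Measure Y) (B ∩ Es i)) M]
        · intro i _ j _ hij
          exact (Es_disj hij).mono inter_subset_right inter_subset_right
      · have h1 : (P : Measure Y) (B \ V M) ≤ (P : Measure Y) (V M)ᶜ :=
          measure_mono (diff_subset_compl _ _)
        refine h1.trans ?_
        rw [prob_compl_eq_one_sub (V_mble M)]
        rw [tsub_le_iff_right]
        rw [add_comm]
        exact hVM
    have step2 : ∀ i : Fin M, (P : Measure Y) (B ∩ Es i) ≤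
        (if yp i ∈ Metric.thickening t B then ENNReal.ofReal (w i : ℝ) else 0)
          + ENNReal.ofReal γ := by
      intro i
      rcases eq_empty_or_nonempty (B ∩ Es i) with he | ⟨z, hzB, hzE⟩
      · simp [he]
      · have hyi : yp i ∈ Metric.thickening t B := by
          refine Metric.mem_thickening_iff.2 ⟨z, hzB, ?_⟩
          have := hyclose i z hzE
          rw [dist_comm]
          linarith
        rw [if_pos hyi]
        exact (measure_mono inter_subset_right).trans (hw_ge i)
    calc (P : Measure Y) B
        ≤ ∑ i : Fin M, (P : Measure Y) (B ∩ Es i) + ENNReal.ofReal (δ / 8) := step1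
      _ ≤ (∑ i : Fin M, ((if yp i ∈ Metric.thickening t B then
            ENNReal.ofReal (w i : ℝ) else 0) + ENNReal.ofReal γ)) + ENNReal.ofReal (δ / 8) :=
          add_le_add_left (Finset.sum_le_sum fun i _ => step2 i) _
      _ = (Q : Measure Y) (Metric.thickening t B) +
            ((Finset.univ : Finset (Fin M)).card • ENNReal.ofReal γ + ENNReal.ofReal (δ / 8)) := by
          rw [Finset.sum_add_distrib, Finset.sum_const,
            hQap _ isOpen_thickening.measurableSet, add_assoc]
      _ ≤ (Q : Measure Y) (Metric.thickening t B) + ε := by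
          refine add_le_add_right ?_ _
          refine le_trans ?_ hofδε
          rw [nsmul_eq_mul]
          refine le_trans (add_le_add_left (hcard_gamma _) _) ?_
          rw [← ENNReal.ofReal_add (by linarith) (by linarith)]
          exact ENNReal.ofReal_le_ofReal (by linarith)
  · -- Q B ≤ P (thickening) + ε
    have step1 : ∀ i : Fin M, (if yp i ∈ B then ENNReal.ofReal (w i : ℝ) else 0) ≤
        (if yp i ∈ B then (P : Measure Y) (Es i) else 0)
          + (if i = i0 then ENNReal.ofReal (δ / 4) else 0) := by
      intro i
      by_cases hyB : yp i ∈ B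
      · rw [if_pos hyB, if_pos hyB]
        exact hw_le i
      · rw [if_neg hyB, if_neg hyB, zero_add]
        exact zero_le
    have step2 : ∑ i : Fin M, (if yp i ∈ B then (P : Measure Y) (Es i) else 0) ≤
        (P : Measure Y) (Metric.thickening t B) := by
      rw [← Finset.sum_filter]
      have hdisj : ((Finset.univ.filter (fun i : Fin M => yp i ∈ B)) : Set (Fin M)).PairwiseDisjoint
          (fun i : Fin M => Es ↑i) := fun i _ j _ hij => Es_disj (Fin.val_injective.ne hij)
      have hbi := measure_biUnion_finset (μ := (P : Measure Y)) hdisj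
        (fun i _ => Es_mble (i : ℕ))
      rw [← hbi]
      refine measure_mono (iUnion₂_subset fun i hi => ?_)
      intro z hz
      refine Metric.mem_thickening_iff.2 ⟨yp i, (Finset.mem_filter.1 hi).2, ?_⟩
      have := hyclose i z hz
      linarith
    calc (Q : Measure Y) B
        = ∑ i : Fin M, if yp i ∈ B then ENNReal.ofReal (w i : ℝ) else 0 := hQap B hB
      _ ≤ ∑ i : Fin M, ((if yp i ∈ B then (P : Measure Y) (Es i) else 0)
            + (if i = i0 then ENNReal.ofReal (δ / 4) else 0)) :=
          Finset.sum_le_sum fun i _ => step1 i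
      _ = (∑ i : Fin M, if yp i ∈ B then (P : Measure Y) (Es i) else 0)
            + ENNReal.ofReal (δ / 4) := by
          rw [Finset.sum_add_distrib]
          congr 1
          rw [Finset.sum_ite_eq' Finset.univ i0 (fun _ => ENNReal.ofReal (δ / 4))]
          simp
      _ ≤ (P : Measure Y) (Metric.thickening t B) + ε := by
          refine add_le_add step2 (le_trans ?_ hofδε)
          exact ENNReal.ofReal_le_ofReal (by linarith)

theorem probabilityMeasure_separable :
    TopologicalSpace.SeparableSpace (ProbabilityMeasure Y) := by
  obtain ⟨D, D_cnt, D_dense⟩ := TopologicalSpace.exists_countable_dense Y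
  obtain ⟨y₀, hy₀⟩ := D_dense.nonempty
  -- first, separability for the Lévy-Prokhorov pseudometric
  have hLP : TopologicalSpace.SeparableSpace (LevyProkhorov (ProbabilityMeasure Y)) := by
    refine ⟨⟨(LevyProkhorov.toMeasureEquiv (α := ProbabilityMeasure Y)).symm '' ratPMSet y₀ D,
      Countable.image (ratPMSet_countable y₀ D_cnt) _, ?_⟩⟩
    rw [Metric.dense_iff]
    intro P r hr
    obtain ⟨Q, hQS, hQd⟩ := exists_ratPM_levyProkhorovEDist_le y₀ hy₀ D_dense
      (LevyProkhorov.toMeasureEquiv (α := ProbabilityMeasure Y) P) (half_pos hr)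
    refine ⟨(LevyProkhorov.toMeasureEquiv (α := ProbabilityMeasure Y)).symm Q,
      Set.mem_inter ?_ (Set.mem_image_of_mem _ hQS)⟩
    rw [Metric.mem_ball]
    have hd : dist ((LevyProkhorov.toMeasureEquiv (α := ProbabilityMeasure Y)).symm Q) P =
        levyProkhorovDist (Q : Measure Y)
          ((LevyProkhorov.toMeasureEquiv (α := ProbabilityMeasure Y) P : ProbabilityMeasure Y) : Measure Y) :=
      rfl
    rw [hd, levyProkhorovDist_comm]
    have h1 : levyProkhorovDist
        ((LevyProkhorov.toMeasureEquiv (α := ProbabilityMeasure Y) P : ProbabilityMeasure Y) : Measure Y)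
        (Q : Measure Y) ≤ r / 2 := by
      have := ENNReal.toReal_mono ENNReal.ofReal_ne_top hQd
      rwa [ENNReal.toReal_ofReal (half_pos hr).le] at this
    linarith
  -- transfer along the homeomorphism
  have h := LevyProkhorov.probabilityMeasureHomeomorph (Ω := Y)
  exact h.symm.surjective.denseRange.separableSpace h.symm.continuous

theorem probabilityMeasure_secondCountable :
    SecondCountableTopology (ProbabilityMeasure Y) := by
  haveI := probabilityMeasure_separable (Y := Y)
  letI : PseudoMetricSpace (ProbabilityMeasure Y) :=
    TopologicalSpace.pseudoMetrizableSpacePseudoMetric _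
  exact UniformSpace.secondCountable_of_separable _

/-- The subbasic sets for the topology of convergence in distribution. -/
def pmSubbasis : Set (Set (ProbabilityMeasure Y)) :=
  {s | ∃ (f : Y →ᵇ ℝ≥0) (V : Set ℝ≥0), IsOpen V ∧
    s = (fun μ : ProbabilityMeasure Y => μ.toFiniteMeasure.testAgainstNN f) ⁻¹' V}

theorem pm_topology_eq_generateFrom :
    (inferInstance : TopologicalSpace (ProbabilityMeasure Y)) =
      TopologicalSpace.generateFrom (pmSubbasis (Y := Y)) := by
  have e1 : (inferInstance : TopologicalSpace (ProbabilityMeasure Y)) =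
      TopologicalSpace.induced (fun μ : ProbabilityMeasure Y => μ.toFiniteMeasure)
        inferInstance := rfl
  have e2 : (inferInstance : TopologicalSpace (FiniteMeasure Y)) =
      TopologicalSpace.induced (fun μ : FiniteMeasure Y => μ.toWeakDualBCNN) inferInstance := rfl
  have e3 : (inferInstance : TopologicalSpace (WeakDual ℝ≥0 (Y →ᵇ ℝ≥0))) =
      TopologicalSpace.induced (fun φ : WeakDual ℝ≥0 (Y →ᵇ ℝ≥0) => (fun f => φ f))
        Pi.topologicalSpace := rfl
  have key : (inferInstance : TopologicalSpace (ProbabilityMeasure Y)) =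
      ⨅ (f : Y →ᵇ ℝ≥0), TopologicalSpace.induced
        (fun μ : ProbabilityMeasure Y => μ.toFiniteMeasure.testAgainstNN f) inferInstance := by
    rw [e1, e2, e3, induced_compose, induced_compose]
    have e4 : (Pi.topologicalSpace : TopologicalSpace ((Y →ᵇ ℝ≥0) → ℝ≥0)) =
        ⨅ (f : Y →ᵇ ℝ≥0), TopologicalSpace.induced (fun p : (Y →ᵇ ℝ≥0) → ℝ≥0 => p f)
          inferInstance := rfl
    rw [e4, induced_iInf]
    exact iInf_congr fun f => by rw [induced_compose]; rfl
  refine le_antisymm (le_generateFrom ?_) ?_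
  · rintro s ⟨f, V, hV, rfl⟩
    exact (MeasureTheory.ProbabilityMeasure.continuous_testAgainstNN_eval f).isOpen_preimage V hV
  · rw [key]
    refine le_iInf fun f => ?_
    rw [← continuous_iff_le_induced, continuous_def]
    intro V hV
    exact TopologicalSpace.GenerateOpen.basic _ ⟨f, V, hV, rfl⟩

/-- Measurability into the Borel σ-algebra of the topology of convergence in distribution,
from measurability of all test-function evaluations. -/
theorem measurable_probabilityMeasure
    {X : Type*} [MeasurableSpace X]
    (g : X → ProbabilityMeasure Y)
    (hg : ∀ f : Y →ᵇ ℝ≥0, Measurable fun x => (g x).toFiniteMeasure.testAgainstNN f) :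
    @Measurable _ _ _ (borel (ProbabilityMeasure Y)) g := by
  haveI := probabilityMeasure_secondCountable (Y := Y)
  letI : MeasurableSpace (ProbabilityMeasure Y) := borel (ProbabilityMeasure Y)
  haveI : BorelSpace (ProbabilityMeasure Y) := ⟨rfl⟩
  apply measurable_of_isOpen
  intro U hU
  have hB := TopologicalSpace.isTopologicalBasis_of_subbasis
    (pm_topology_eq_generateFrom (Y := Y))
  obtain ⟨S, hSsub, rfl⟩ := hB.open_eq_sUnion hU
  obtain ⟨T, hTc, hTU⟩ := TopologicalSpace.isOpen_iUnion_countable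
    (fun s : S => (s : Set (ProbabilityMeasure Y))) (fun s => hB.isOpen (hSsub s.2))
  have hpre : g ⁻¹' (⋃₀ S) = ⋃ s ∈ T, g ⁻¹' (s : Set (ProbabilityMeasure Y)) := by
    rw [sUnion_eq_iUnion, ← hTU]
    simp [preimage_iUnion]
  rw [hpre]
  refine MeasurableSet.biUnion hTc fun s _ => ?_
  obtain ⟨F, ⟨hFfin, hFsub⟩, hs⟩ := hSsub s.2
  rw [← hs, Set.preimage_sInter]
  refine MeasurableSet.biInter hFfin.countable fun t ht => ?_
  obtain ⟨f, V, hV, rfl⟩ := hFsub ht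
  exact hg f hV.measurableSet


/-- Composition of a jointly lower semicontinuous cost with a Markov kernel is measurable. -/
theorem measurable_cost_comp {X : Type*} [TopologicalSpace X] [SecondCountableTopology X]
    [MeasurableSpace X] [OpensMeasurableSpace X]
    (C : X → Measure Y → ℝ≥0∞)
    (hC_lsc : LowerSemicontinuous fun q : X × ProbabilityMeasure Y => C q.1 (q.2 : Measure Y))
    (κ : Kernel X Y) [IsMarkovKernel κ] :
    Measurable fun x => C x (κ x) := by
  haveI := probabilityMeasure_secondCountable (Y := Y)
  letI mP : MeasurableSpace (ProbabilityMeasure Y) := borel (ProbabilityMeasure Y)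
  haveI : @BorelSpace _ _ mP := ⟨rfl⟩
  have hCm : @Measurable _ _ (@Prod.instMeasurableSpace X (ProbabilityMeasure Y) _ mP) _
      (fun q : X × ProbabilityMeasure Y => C q.1 (q.2 : Measure Y)) :=
    hC_lsc.measurable
  have hgeval : ∀ f : Y →ᵇ ℝ≥0, Measurable fun x =>
      FiniteMeasure.testAgainstNN
        (ProbabilityMeasure.toFiniteMeasure ⟨κ x, inferInstance⟩) f := by
    intro f
    have h1 : Measurable fun x => ∫⁻ y, (f y : ℝ≥0∞) ∂(κ x) :=
      (Measure.measurable_lintegral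
        (measurable_coe_nnreal_ennreal.comp f.continuous.measurable)).comp κ.measurable
    exact h1.ennreal_toNNReal
  have hg : @Measurable _ _ _ mP (fun x => (⟨κ x, inferInstance⟩ : ProbabilityMeasure Y)) :=
    measurable_probabilityMeasure _ hgeval
  have hpair : @Measurable X (X × ProbabilityMeasure Y) _
      (@Prod.instMeasurableSpace X (ProbabilityMeasure Y) _ mP)
      (fun x => (x, (⟨κ x, inferInstance⟩ : ProbabilityMeasure Y))) :=
    @Measurable.prodMk X _ X (ProbabilityMeasure Y) _ mP _ _ measurable_id hg
  exact hCm.comp hpair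

end WOTAux

end WOTAuxSection

/-- The weak optimal transport value associated to a cost `C : X × P(Y) → [0,∞]`,
computed through disintegrations of couplings. -/
def weakTransport (C : X → Measure Y → ℝ≥0∞) (μ : Measure X) (ν : Measure Y) : ℝ≥0∞ :=
  ⨅ (π : Measure (X × Y)) (_ : π.fst = μ ∧ π.snd = ν) (h : IsFiniteMeasure π),
    haveI := h
    ∫⁻ x, C x (π.condKernel x) ∂μ

lemma weakTransport_le {C : X → Measure Y → ℝ≥0∞} {μ : Measure X} {ν : Measure Y}
    (π : Measure (X × Y)) (h : IsFiniteMeasure π) (hm : π.fst = μ ∧ π.snd = ν) :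
    weakTransport C μ ν ≤ haveI := h; ∫⁻ x, C x (π.condKernel x) ∂μ :=
  iInf_le_of_le π (iInf_le_of_le hm (iInf_le _ h))

lemma fst_smul_meas (c : ℝ≥0∞) (ρ : Measure (X × Y)) : (c • ρ).fst = c • ρ.fst := by
  simp [Measure.fst, Measure.map_smul]

lemma snd_smul_meas (c : ℝ≥0∞) (ρ : Measure (X × Y)) : (c • ρ).snd = c • ρ.snd := by
  simp [Measure.snd, Measure.map_smul]

/-- The key mixing estimate: mixing two couplings bounds the weak transport cost of the mixed
marginals by the mixture of the disintegrated costs. -/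
lemma weakTransport_mix_le (C : X → Measure Y → ℝ≥0∞)
    (hC_cvx : ∀ (x : X) (ρ₁ ρ₂ : Measure Y) (a b : ℝ≥0∞), a + b = 1 →
      C x (a • ρ₁ + b • ρ₂) ≤ a * C x ρ₁ + b * C x ρ₂)
    (μ₁ μ₂ : Measure X) (ν₁ ν₂ : Measure Y)
    [IsProbabilityMeasure μ₁] [IsProbabilityMeasure μ₂]
    [IsProbabilityMeasure ν₁] [IsProbabilityMeasure ν₂]
    (π₁ π₂ : Measure (X × Y)) [hfin₁ : IsFiniteMeasure π₁] [hfin₂ : IsFiniteMeasure π₂]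
    (hm₁ : π₁.fst = μ₁ ∧ π₁.snd = ν₁) (hm₂ : π₂.fst = μ₂ ∧ π₂.snd = ν₂)
    (hf₁ : Measurable fun x => C x (π₁.condKernel x))
    (hf₂ : Measurable fun x => C x (π₂.condKernel x))
    (a b : ℝ≥0∞) (hab : a + b = 1) :
    weakTransport C (a • μ₁ + b • μ₂) (a • ν₁ + b • ν₂) ≤
      a * ∫⁻ x, C x (π₁.condKernel x) ∂μ₁ +
      b * ∫⁻ x, C x (π₂.condKernel x) ∂μ₂ := by
  have ha1 : a ≤ 1 := hab ▸ le_self_add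
  have hb1 : b ≤ 1 := hab ▸ le_add_self
  have haT : a ≠ ⊤ := (ha1.trans_lt ENNReal.one_lt_top).ne
  have hbT : b ≠ ⊤ := (hb1.trans_lt ENNReal.one_lt_top).ne
  set μ : Measure X := a • μ₁ + b • μ₂ with hμ
  set ν : Measure Y := a • ν₁ + b • ν₂ with hν
  set π : Measure (X × Y) := a • π₁ + b • π₂ with hπ
  haveI hμ1 : IsProbabilityMeasure μ := by
    constructor
    simp [hμ, hab]
  haveI hsm₁ : IsFiniteMeasure (a • μ₁) := by
    constructor
    rw [Measure.smul_apply, smul_eq_mul]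
    exact ENNReal.mul_lt_top haT.lt_top (measure_lt_top _ _)
  haveI hsm₂ : IsFiniteMeasure (b • μ₂) := by
    constructor
    rw [Measure.smul_apply, smul_eq_mul]
    exact ENNReal.mul_lt_top hbT.lt_top (measure_lt_top _ _)
  haveI hπfin : IsFiniteMeasure π := by
    constructor
    rw [hπ, Measure.add_apply, Measure.smul_apply, Measure.smul_apply, smul_eq_mul, smul_eq_mul]
    exact ENNReal.add_lt_top.2 ⟨ENNReal.mul_lt_top haT.lt_top (measure_lt_top _ _),
      ENNReal.mul_lt_top hbT.lt_top (measure_lt_top _ _)⟩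
  have hπfst : π.fst = μ := by
    rw [hπ, Measure.fst_add, fst_smul_meas, fst_smul_meas, hm₁.1, hm₂.1]
  have hπsnd : π.snd = ν := by
    rw [hπ, Measure.snd_add, snd_smul_meas, snd_smul_meas, hm₁.2, hm₂.2]
  -- Radon-Nikodym weights
  set d₁ : X → ℝ≥0∞ := (a • μ₁).rnDeriv μ with hd₁
  set d₂ : X → ℝ≥0∞ := (b • μ₂).rnDeriv μ with hd₂
  have hd₁m : Measurable d₁ := Measure.measurable_rnDeriv _ _
  have hd₂m : Measurable d₂ := Measure.measurable_rnDeriv _ _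
  have hac₁ : a • μ₁ ≪ μ := by
    rw [hμ]
    exact Measure.absolutelyContinuous_of_le (Measure.le_add_right le_rfl)
  have hac₂ : b • μ₂ ≪ μ := by
    rw [hμ]
    exact Measure.absolutelyContinuous_of_le (Measure.le_add_left le_rfl)
  have hdsum : ∀ᵐ x ∂μ, d₁ x + d₂ x = 1 := by
    have h1 := Measure.rnDeriv_add (a • μ₁) (b • μ₂) μ
    have h2 := Measure.rnDeriv_self μ
    rw [← hμ] at h1
    filter_upwards [h1, h2] with x hx1 hx2
    have hx3 : d₁ x + d₂ x = μ.rnDeriv μ x := by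
      rw [hd₁, hd₂, hx1, Pi.add_apply]
    rw [hx3, hx2]
  set w₁ : X → ℝ≥0∞ := fun x => min (d₁ x) 1 with hw₁
  set w₂ : X → ℝ≥0∞ := fun x => min (d₂ x) 1 with hw₂
  have hw₁m : Measurable w₁ := hd₁m.min measurable_const
  have hw₂m : Measurable w₂ := hd₂m.min measurable_const
  have hw₁le : ∀ x, w₁ x ≤ 1 := fun x => min_le_right _ _
  have hw₂le : ∀ x, w₂ x ≤ 1 := fun x => min_le_right _ _
  have hw₁d : w₁ =ᵐ[μ] d₁ := by
    filter_upwards [hdsum] with x hx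
    have h : d₁ x ≤ 1 := hx ▸ le_self_add
    exact min_eq_left h
  have hw₂d : w₂ =ᵐ[μ] d₂ := by
    filter_upwards [hdsum] with x hx
    have h : d₂ x ≤ 1 := hx ▸ le_add_self
    exact min_eq_left h
  have hwsum : ∀ᵐ x ∂μ, w₁ x + w₂ x = 1 := by
    filter_upwards [hdsum, hw₁d, hw₂d] with x hx h1 h2
    rw [h1, h2, hx]
  have hμw₁ : μ.withDensity w₁ = a • μ₁ := by
    rw [withDensity_congr_ae hw₁d, hd₁]
    exact Measure.withDensity_rnDeriv_eq _ _ hac₁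
  have hμw₂ : μ.withDensity w₂ = b • μ₂ := by
    rw [withDensity_congr_ae hw₂d, hd₂]
    exact Measure.withDensity_rnDeriv_eq _ _ hac₂
  -- the mixed kernel
  have huc₁ : Measurable (Function.uncurry fun (x : X) (_ : Y) => w₁ x) :=
    hw₁m.comp measurable_fst
  have huc₂ : Measurable (Function.uncurry fun (x : X) (_ : Y) => w₂ x) :=
    hw₂m.comp measurable_fst
  set κ : Kernel X Y := Kernel.withDensity π₁.condKernel (fun x _ => w₁ x)
      + Kernel.withDensity π₂.condKernel (fun x _ => w₂ x) with hκ
  have hκ₁app : ∀ x, Kernel.withDensity π₁.condKernel (fun x _ => w₁ x) x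
      = w₁ x • π₁.condKernel x := by
    intro x
    rw [Kernel.withDensity_apply _ huc₁]
    exact withDensity_const (w₁ x)
  have hκ₂app : ∀ x, Kernel.withDensity π₂.condKernel (fun x _ => w₂ x) x
      = w₂ x • π₂.condKernel x := by
    intro x
    rw [Kernel.withDensity_apply _ huc₂]
    exact withDensity_const (w₂ x)
  have hκapp : ∀ x, κ x = w₁ x • π₁.condKernel x + w₂ x • π₂.condKernel x := by
    intro x
    rw [hκ, Kernel.add_apply, hκ₁app, hκ₂app]
  haveI hκfin : IsFiniteKernel κ := by
    refine ⟨2, ENNReal.ofNat_lt_top, fun x => ?_⟩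
    rw [hκapp x, Measure.add_apply, Measure.smul_apply, Measure.smul_apply,
      smul_eq_mul, smul_eq_mul, measure_univ, measure_univ, mul_one, mul_one]
    calc w₁ x + w₂ x ≤ 1 + 1 := add_le_add (hw₁le x) (hw₂le x)
      _ = 2 := one_add_one_eq_two
  have hd₁eq : μ₁ ⊗ₘ π₁.condKernel = π₁ := by
    rw [← hm₁.1]
    exact π₁.disintegrate π₁.condKernel
  have hd₂eq : μ₂ ⊗ₘ π₂.condKernel = π₂ := by
    rw [← hm₂.1]
    exact π₂.disintegrate π₂.condKernel
  -- the disintegration identity for the mixture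
  have hcomp : μ ⊗ₘ κ = π := by
    ext s hs
    rw [Measure.compProd_apply hs]
    have hint : ∀ x, κ x (Prod.mk x ⁻¹' s) =
        w₁ x * π₁.condKernel x (Prod.mk x ⁻¹' s)
          + w₂ x * π₂.condKernel x (Prod.mk x ⁻¹' s) := by
      intro x
      rw [hκapp x, Measure.add_apply, Measure.smul_apply, Measure.smul_apply,
        smul_eq_mul, smul_eq_mul]
    rw [lintegral_congr hint]
    rw [lintegral_add_left (f := fun x => w₁ x * π₁.condKernel x (Prod.mk x ⁻¹' s)) (hw₁m.mul (Kernel.measurable_kernel_prodMk_left hs))]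
    have e₁ : ∫⁻ x, w₁ x * π₁.condKernel x (Prod.mk x ⁻¹' s) ∂μ = a * π₁ s := by
      calc ∫⁻ x, w₁ x * π₁.condKernel x (Prod.mk x ⁻¹' s) ∂μ
          = ∫⁻ x, π₁.condKernel x (Prod.mk x ⁻¹' s) ∂(μ.withDensity w₁) :=
            (lintegral_withDensity_eq_lintegral_mul μ hw₁m
              (Kernel.measurable_kernel_prodMk_left hs)).symm
        _ = a * ∫⁻ x, π₁.condKernel x (Prod.mk x ⁻¹' s) ∂μ₁ := by
            rw [hμw₁, lintegral_smul_measure, smul_eq_mul]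
        _ = a * π₁ s := by rw [← Measure.compProd_apply hs, hd₁eq]
    have e₂ : ∫⁻ x, w₂ x * π₂.condKernel x (Prod.mk x ⁻¹' s) ∂μ = b * π₂ s := by
      calc ∫⁻ x, w₂ x * π₂.condKernel x (Prod.mk x ⁻¹' s) ∂μ
          = ∫⁻ x, π₂.condKernel x (Prod.mk x ⁻¹' s) ∂(μ.withDensity w₂) :=
            (lintegral_withDensity_eq_lintegral_mul μ hw₂m
              (Kernel.measurable_kernel_prodMk_left hs)).symm
        _ = b * ∫⁻ x, π₂.condKernel x (Prod.mk x ⁻¹' s) ∂μ₂ := by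
            rw [hμw₂, lintegral_smul_measure, smul_eq_mul]
        _ = b * π₂ s := by rw [← Measure.compProd_apply hs, hd₂eq]
    rw [e₁, e₂, hπ, Measure.add_apply, Measure.smul_apply, Measure.smul_apply,
      smul_eq_mul, smul_eq_mul]
  have hae : ∀ᵐ x ∂μ, κ x = π.condKernel x := by
    have hπeq : π = π.fst ⊗ₘ κ := by
      rw [hπfst]
      exact hcomp.symm
    have h := eq_condKernel_of_measure_eq_compProd κ hπeq
    rwa [hπfst] at h
  -- final estimate
  calc weakTransport C μ ν
      ≤ ∫⁻ x, C x (π.condKernel x) ∂μ := weakTransport_le π hπfin ⟨hπfst, hπsnd⟩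
    _ = ∫⁻ x, C x (κ x) ∂μ := by
        refine lintegral_congr_ae ?_
        filter_upwards [hae] with x hx
        rw [hx]
    _ ≤ ∫⁻ x, (w₁ x * C x (π₁.condKernel x) + w₂ x * C x (π₂.condKernel x)) ∂μ := by
        refine lintegral_mono_ae ?_
        filter_upwards [hwsum] with x hx
        rw [hκapp x]
        exact hC_cvx x _ _ _ _ hx
    _ = ∫⁻ x, w₁ x * C x (π₁.condKernel x) ∂μ + ∫⁻ x, w₂ x * C x (π₂.condKernel x) ∂μ :=
        lintegral_add_left (hw₁m.mul hf₁) _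
    _ = a * ∫⁻ x, C x (π₁.condKernel x) ∂μ₁ + b * ∫⁻ x, C x (π₂.condKernel x) ∂μ₂ := by
        congr 1
        · calc ∫⁻ x, w₁ x * C x (π₁.condKernel x) ∂μ
              = ∫⁻ x, C x (π₁.condKernel x) ∂(μ.withDensity w₁) :=
                (lintegral_withDensity_eq_lintegral_mul μ hw₁m hf₁).symm
            _ = a * ∫⁻ x, C x (π₁.condKernel x) ∂μ₁ := by rw [hμw₁, lintegral_smul_measure, smul_eq_mul]
        · calc ∫⁻ x, w₂ x * C x (π₂.condKernel x) ∂μ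
              = ∫⁻ x, C x (π₂.condKernel x) ∂(μ.withDensity w₂) :=
                (lintegral_withDensity_eq_lintegral_mul μ hw₂m hf₂).symm
            _ = b * ∫⁻ x, C x (π₂.condKernel x) ∂μ₂ := by rw [hμw₂, lintegral_smul_measure, smul_eq_mul]

/-- Joint convexity of the weak optimal transport value in the pair of marginals. -/
theorem weakTransport_jointly_convex (p : ℝ) (hp : 1 ≤ p) (x₀ : X) (y₀ : Y)
    (C : X → Measure Y → ℝ≥0∞)
    (hC_lsc : LowerSemicontinuous fun q : X × ProbabilityMeasure Y => C q.1 (q.2 : Measure Y))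
    (hC_cvx : ∀ (x : X) (ρ₁ ρ₂ : Measure Y) (a b : ℝ≥0∞), a + b = 1 →
      C x (a • ρ₁ + b • ρ₂) ≤ a * C x ρ₁ + b * C x ρ₂)
    (μ₁ μ₂ : Measure X) (ν₁ ν₂ : Measure Y)
    [IsProbabilityMeasure μ₁] [IsProbabilityMeasure μ₂]
    [IsProbabilityMeasure ν₁] [IsProbabilityMeasure ν₂]
    (hμ₁ : ∫⁻ x, ENNReal.ofReal (dist x x₀ ^ p) ∂μ₁ < ⊤)
    (hμ₂ : ∫⁻ x, ENNReal.ofReal (dist x x₀ ^ p) ∂μ₂ < ⊤)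
    (hν₁ : ∫⁻ y, ENNReal.ofReal (dist y y₀ ^ p) ∂ν₁ < ⊤)
    (hν₂ : ∫⁻ y, ENNReal.ofReal (dist y y₀ ^ p) ∂ν₂ < ⊤)
    (a b : ℝ≥0∞) (hab : a + b = 1) :
    weakTransport C (a • μ₁ + b • μ₂) (a • ν₁ + b • ν₂)
      ≤ a * weakTransport C μ₁ ν₁ + b * weakTransport C μ₂ ν₂ := by
  rcases eq_or_ne a 0 with rfl | ha0
  · have hb : b = 1 := by simpa using hab
    subst hb
    simp
  rcases eq_or_ne b 0 with rfl | hb0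
  · have ha : a = 1 := by simpa using hab
    subst ha
    simp
  have ha1 : a ≤ 1 := hab ▸ le_self_add
  have hb1 : b ≤ 1 := hab ▸ le_add_self
  have haT : a ≠ ⊤ := (ha1.trans_lt ENNReal.one_lt_top).ne
  have hbT : b ≠ ⊤ := (hb1.trans_lt ENNReal.one_lt_top).ne
  rcases eq_or_ne (a * weakTransport C μ₁ ν₁ + b * weakTransport C μ₂ ν₂) ⊤ with hT | hT
  · rw [hT]
    exact le_top
  have hW₁ : weakTransport C μ₁ ν₁ ≠ ⊤ := by
    intro h
    apply hT
    rw [h, ENNReal.mul_top ha0]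
    exact top_add _
  have hW₂ : weakTransport C μ₂ ν₂ ≠ ⊤ := by
    intro h
    apply hT
    rw [h, ENNReal.mul_top hb0]
    exact add_top _
  apply ENNReal.le_of_forall_pos_le_add
  intro ε hε _
  have hεpos : (0 : ℝ≥0∞) < ε := ENNReal.coe_pos.2 hε
  -- extract near-optimal couplings
  have h₁ : weakTransport C μ₁ ν₁ < weakTransport C μ₁ ν₁ + ε :=
    ENNReal.lt_add_right hW₁ hεpos.ne'
  rw [weakTransport] at h₁
  obtain ⟨π₁, h₁⟩ := iInf_lt_iff.1 h₁
  obtain ⟨hm₁, h₁⟩ := iInf_lt_iff.1 h₁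
  obtain ⟨hfin₁, h₁⟩ := iInf_lt_iff.1 h₁
  have h₂ : weakTransport C μ₂ ν₂ < weakTransport C μ₂ ν₂ + ε :=
    ENNReal.lt_add_right hW₂ hεpos.ne'
  rw [weakTransport] at h₂
  obtain ⟨π₂, h₂⟩ := iInf_lt_iff.1 h₂
  obtain ⟨hm₂, h₂⟩ := iInf_lt_iff.1 h₂
  obtain ⟨hfin₂, h₂⟩ := iInf_lt_iff.1 h₂
  haveI := hfin₁; haveI := hfin₂
  have hf₁ : Measurable fun x => C x (π₁.condKernel x) :=
    WOTAux.measurable_cost_comp C hC_lsc π₁.condKernel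
  have hf₂ : Measurable fun x => C x (π₂.condKernel x) :=
    WOTAux.measurable_cost_comp C hC_lsc π₂.condKernel
  calc weakTransport C (a • μ₁ + b • μ₂) (a • ν₁ + b • ν₂)
      ≤ a * ∫⁻ x, C x (π₁.condKernel x) ∂μ₁ + b * ∫⁻ x, C x (π₂.condKernel x) ∂μ₂ :=
        weakTransport_mix_le C hC_cvx μ₁ μ₂ ν₁ ν₂ π₁ π₂ hm₁ hm₂ hf₁ hf₂ a b hab
    _ ≤ a * (weakTransport C μ₁ ν₁ + ε) + b * (weakTransport C μ₂ ν₂ + ε) :=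
        add_le_add (mul_le_mul_right h₁.le a) (mul_le_mul_right h₂.le b)
    _ = (a * weakTransport C μ₁ ν₁ + b * weakTransport C μ₂ ν₂) + (a + b) * ε := by ring
    _ = (a * weakTransport C μ₁ ν₁ + b * weakTransport C μ₂ ν₂) + ε := by rw [hab, one_mul]

end
end
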